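/- Let Γ be a discrete, cocompact, torsion-free subgroup of SL(2,ℝ) and Λ = Γ•o. Then the setwise stabilizer S = {g ∈ SL(2,ℝ) : g•Λ = Λ} is a discrete subgroup of SL(2,ℝ); in particular S acts properly discontinuously on ℍ. -/

import Mathlib

noncomputable section

open UpperHalfPlane MeasureTheory Topology Filter Metric Set Pointwise

local notation "SL2R" => Matrix.SpecialLinearGroup (Fin 2) ℝ

/-- The matrix topology on `SL(2,ℝ)`, induced from the space of `2 × 2` real matrices. -/
instance : TopologicalSpace SL2R :=
  TopologicalSpace.induced (fun g => (g : Matrix (Fin 2) (Fin 2) ℝ)) inferInstance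

/-- The basepoint `o = i` of the upper half-plane. -/
def o : ℍ := UpperHalfPlane.I

/-- A subgroup of `SL(2,ℝ)` is cocompact if the translates of some compact set cover `ℍ`. -/
def IsCocompact (Γ : Subgroup SL2R) : Prop :=
  ∃ K : Set ℍ, IsCompact K ∧ ⋃ γ : Γ, (γ : SL2R) • K = Set.univ

/-- The orbit `Λ = Γ • o` of the basepoint. -/
def orbitO (Γ : Subgroup SL2R) : Set ℍ := {z : ℍ | ∃ γ ∈ Γ, γ • o = z}

/-- The focal counting function `υ(z) = #{λ ∈ Λ | λ ≠ o, d(z,λ) = d(z,o)}`. -/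
def upsilon (Γ : Subgroup SL2R) (z : ℍ) : ℕ :=
  {l : ℍ | l ∈ orbitO Γ ∧ l ≠ o ∧ dist z l = dist z o}.ncard

/-- The Brillouin index `B(z) = #{λ ∈ Λ | d(z,λ) ≤ d(z,o)}`. -/
def brillouinIndex (Γ : Subgroup SL2R) (z : ℍ) : ℕ :=
  {l : ℍ | l ∈ orbitO Γ ∧ dist z l ≤ dist z o}.ncard

/-- The `k`-th Brillouin set `B_k = {z | B(z) = k}`. -/
def brillouinSet (Γ : Subgroup SL2R) (k : ℕ) : Set ℍ := {z : ℍ | brillouinIndex Γ z = k}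

/-- The perpendicular bisector `L_λ = {z | d(z,o) = d(z,λ)}`. -/
def bisector (l : ℍ) : Set ℍ := {z : ℍ | dist z o = dist z l}

/-- A monoid is torsion-free if its only element of finite order is the identity
(the definition `Monoid.IsTorsionFree` of the older Mathlib, since removed). -/
def Monoid.IsTorsionFree (G : Type*) [Monoid G] : Prop :=
  ∀ g : G, g ≠ 1 → ¬IsOfFinOrder g


abbrev M2 := Matrix (Fin 2) (Fin 2) ℝ

lemma inducing_coe : Topology.IsInducing (fun g : SL2R => (g : M2)) := ⟨rfl⟩

lemma closedEmbedding_coe : Topology.IsClosedEmbedding (fun g : SL2R => (g : M2)) := by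
  refine ⟨⟨inducing_coe, fun g h hgh => Subtype.ext hgh⟩, ?_⟩
  have : Set.range (fun g : SL2R => (g : M2)) = {A : M2 | A.det = 1} := by
    ext A
    constructor
    · rintro ⟨g, rfl⟩; exact g.property
    · intro h; exact ⟨⟨A, h⟩, rfl⟩
  rw [this]
  exact isClosed_eq (continuous_id.matrix_det) continuous_const

instance : T2Space SL2R := closedEmbedding_coe.isEmbedding.t2Space

instance : LocallyCompactSpace M2 := inferInstanceAs (LocallyCompactSpace (Fin 2 → Fin 2 → ℝ))

instance : LocallyCompactSpace SL2R :=
  inducing_coe.locallyCompactSpace closedEmbedding_coe.isClosed_range.isLocallyClosed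

instance : IsTopologicalGroup SL2R where
  continuous_mul := by
    rw [inducing_coe.continuous_iff]
    exact ((continuous_induced_dom.comp continuous_fst).mul
      (continuous_induced_dom.comp continuous_snd))
  continuous_inv := by
    rw [inducing_coe.continuous_iff]
    simpa [Function.comp_def, Matrix.SpecialLinearGroup.coe_inv] using
      (continuous_induced_dom (f := fun g : SL2R => (g : M2))).matrix_adjugate

lemma continuous_entry (i j : Fin 2) : Continuous fun g : SL2R => g i j := by
  exact (continuous_apply j).comp ((continuous_apply i).comp continuous_induced_dom)

lemma denom_ne_zero' (g : SL2R) (z : ℍ) :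
    ((g 1 0 : ℝ) : ℂ) * (z : ℂ) + ((g 1 1 : ℝ) : ℂ) ≠ 0 := by
  intro h
  have hdet : g 0 0 * g 1 1 - g 0 1 * g 1 0 = 1 := by
    have h2 := g.property
    rwa [Matrix.det_fin_two] at h2
  have him : (g 1 0 : ℝ) * z.im = 0 := by
    have := congrArg Complex.im h
    simpa using this
  have hc : g 1 0 = 0 := by
    rcases mul_eq_zero.mp him with h' | h'
    · exact h'
    · exact absurd h' z.im_ne_zero
  have hd : g 1 1 = 0 := by
    have := congrArg Complex.re h
    simpa [hc] using this
  rw [hc, hd] at hdet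
  simp at hdet

lemma coe_smul' (g : SL2R) (z : ℍ) :
    ((g • z : ℍ) : ℂ) =
      (((g 0 0 : ℝ) : ℂ) * (z : ℂ) + ((g 0 1 : ℝ) : ℂ)) /
        (((g 1 0 : ℝ) : ℂ) * (z : ℂ) + ((g 1 1 : ℝ) : ℂ)) := by
  rw [UpperHalfPlane.specialLinearGroup_apply]
  simp [UpperHalfPlane.coe_mk]

lemma smul_o_coe (g : SL2R) :
    ((g • o : ℍ) : ℂ) =
      (((g 0 0 : ℝ) : ℂ) * Complex.I + ((g 0 1 : ℝ) : ℂ)) /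
        (((g 1 0 : ℝ) : ℂ) * Complex.I + ((g 1 1 : ℝ) : ℂ)) :=
  coe_smul' g o

lemma smul_o_re (g : SL2R) :
    (g • o).re = (g 0 0 * g 1 0 + g 0 1 * g 1 1) / ((g 1 0) ^ 2 + (g 1 1) ^ 2) := by
  have h := congrArg Complex.re (smul_o_coe g)
  rw [UpperHalfPlane.coe_re] at h
  rw [h]
  simp [Complex.div_re, Complex.normSq_apply]
  ring_nf

lemma smul_o_im (g : SL2R) :
    (g • o).im = 1 / ((g 1 0) ^ 2 + (g 1 1) ^ 2) := by
  have hdet : g 0 0 * g 1 1 - g 0 1 * g 1 0 = 1 := by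
    have h2 := g.property
    rwa [Matrix.det_fin_two] at h2
  have h := congrArg Complex.im (smul_o_coe g)
  rw [UpperHalfPlane.coe_im] at h
  rw [h]
  rw [Complex.div_im]
  simp [Complex.normSq_apply]
  rw [div_sub_div_same, hdet, one_div]
  ring_nf

lemma s_pos (g : SL2R) : 0 < (g 1 0) ^ 2 + (g 1 1) ^ 2 := by
  have hdet : g 0 0 * g 1 1 - g 0 1 * g 1 0 = 1 := by
    have h2 := g.property
    rwa [Matrix.det_fin_two] at h2
  rcases eq_or_ne (g 1 0) 0 with hc | hc
  · rcases eq_or_ne (g 1 1) 0 with hd | hd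
    · rw [hc, hd] at hdet; simp at hdet
    · have h1 : 0 < (g 1 1) ^ 2 := by positivity
      nlinarith [sq_nonneg (g 1 0)]
  · have h1 : 0 < (g 1 0) ^ 2 := by positivity
    nlinarith [sq_nonneg (g 1 1)]

lemma sum_sq_eq (g : SL2R) :
    (g 0 0) ^ 2 + (g 0 1) ^ 2 + (g 1 0) ^ 2 + (g 1 1) ^ 2 =
      2 * Real.cosh (dist (g • o) o) := by
  have hdet : g 0 0 * g 1 1 - g 0 1 * g 1 0 = 1 := by
    have h2 := g.property
    rwa [Matrix.det_fin_two] at h2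
  have hs := s_pos g
  have hre : o.re = 0 := rfl
  have him : o.im = 1 := rfl
  rw [UpperHalfPlane.cosh_dist', smul_o_re, smul_o_im, hre, him]
  have hs' : (g 1 0) ^ 2 + (g 1 1) ^ 2 ≠ 0 := hs.ne'
  field_simp
  linear_combination (
    (g 0 0 * g 1 1 - g 0 1 * g 1 0 + 1)) * hdet

lemma continuous_smul_const (z : ℍ) : Continuous fun g : SL2R => g • z := by
  rw [UpperHalfPlane.isOpenEmbedding_coe.isInducing.continuous_iff]
  have : (UpperHalfPlane.coe ∘ fun g : SL2R => g • z) = fun g : SL2R =>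
      (((g 0 0 : ℝ) : ℂ) * (z : ℂ) + ((g 0 1 : ℝ) : ℂ)) /
        (((g 1 0 : ℝ) : ℂ) * (z : ℂ) + ((g 1 1 : ℝ) : ℂ)) := by
    funext g; exact coe_smul' g z
  rw [this]
  have hcont : ∀ i j : Fin 2, Continuous fun g : SL2R => ((g i j : ℝ) : ℂ) := fun i j =>
    Complex.continuous_ofReal.comp (continuous_entry i j)
  exact (((hcont 0 0).mul continuous_const).add (hcont 0 1)).div
    (((hcont 1 0).mul continuous_const).add (hcont 1 1)) (fun g => denom_ne_zero' g z)

lemma isCompact_dist_le (R : ℝ) : IsCompact {g : SL2R | dist (g • o) o ≤ R} := by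
  set B := Real.sqrt (2 * Real.cosh R) with hB
  have hT : IsCompact ((fun g : SL2R => (g : M2)) ⁻¹'
      (Set.pi Set.univ fun _ : Fin 2 => Set.pi Set.univ fun _ : Fin 2 => Icc (-B) B)) :=
    closedEmbedding_coe.isCompact_preimage
      (isCompact_univ_pi fun _ => isCompact_univ_pi fun _ => isCompact_Icc)
  refine IsCompact.of_isClosed_subset hT
    (isClosed_le ((continuous_smul_const o).dist continuous_const) continuous_const) ?_
  intro g hg
  intro i _ j _
  have hsum := sum_sq_eq g
  have hcosh : Real.cosh (dist (g • o) o) ≤ Real.cosh R := by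
    apply Real.cosh_le_cosh.mpr
    rw [abs_of_nonneg dist_nonneg]
    exact le_trans hg (le_abs_self R)
  have hsq : (g i j) ^ 2 ≤ 2 * Real.cosh R := by
    have h1 : (g i j) ^ 2 ≤ (g 0 0) ^ 2 + (g 0 1) ^ 2 + (g 1 0) ^ 2 + (g 1 1) ^ 2 := by
      fin_cases i <;> fin_cases j <;>
        simp only [Fin.zero_eta, Fin.mk_one, Fin.isValue] <;>
        nlinarith [sq_nonneg (g 0 0), sq_nonneg (g 0 1), sq_nonneg (g 1 0), sq_nonneg (g 1 1)]
    calc (g i j) ^ 2 ≤ _ := h1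
      _ = 2 * Real.cosh (dist (g • o) o) := hsum
      _ ≤ 2 * Real.cosh R := by linarith
  have habs : |g i j| ≤ B := by
    rw [hB, ← Real.sqrt_sq_eq_abs]
    exact Real.sqrt_le_sqrt hsq
  exact abs_le.mp habs


lemma finite_inter_compact (Γ : Subgroup SL2R) (hdisc : DiscreteTopology Γ)
    {C : Set SL2R} (hC : IsCompact C) : ((Γ : Set SL2R) ∩ C).Finite := by
  haveI := hdisc
  have h1 : IsCompact ((Γ : Set SL2R) ∩ C) :=
    hC.inter_left (Subgroup.isClosed_of_discrete (H := Γ))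
  have h2 : DiscreteTopology ((Γ : Set SL2R) ∩ C : Set SL2R) :=
    DiscreteTopology.of_subset (show DiscreteTopology ((Γ : Set SL2R)) from hdisc)
      Set.inter_subset_left
  exact h1.finite (isDiscrete_iff_discreteTopology.mpr h2)

lemma finite_orbit_ball (Γ : Subgroup SL2R) (hdisc : DiscreteTopology Γ) (r : ℝ) :
    {l : ℍ | l ∈ orbitO Γ ∧ dist l o ≤ r}.Finite := by
  have hG := finite_inter_compact Γ hdisc (isCompact_dist_le r)
  refine Set.Finite.subset (hG.image (fun g => g • o)) ?_
  rintro l ⟨⟨γ, hγ, rfl⟩, hdist⟩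
  exact ⟨γ, ⟨hγ, hdist⟩, rfl⟩

lemma fix_o_eq_one (Γ : Subgroup SL2R) (hdisc : DiscreteTopology Γ)
    (htf : Monoid.IsTorsionFree Γ) {γ : SL2R} (hγ : γ ∈ Γ) (h : γ • o = o) : γ = 1 := by
  by_contra hne
  have hpow : ∀ n : ℕ, (γ ^ n) • o = o := by
    intro n
    induction n with
    | zero => simp
    | succ n ih => rw [pow_succ, mul_smul, h, ih]
  have hsub : Set.range (fun n : ℕ => γ ^ n) ⊆ (Γ : Set SL2R) ∩ {g : SL2R | dist (g • o) o ≤ 0} := by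
    rintro g ⟨n, rfl⟩
    exact ⟨Γ.pow_mem hγ n, by simp [hpow n]⟩
  have hfin : (Set.range fun n : ℕ => γ ^ n).Finite :=
    Set.Finite.subset (finite_inter_compact Γ hdisc (isCompact_dist_le 0)) hsub
  have hninj : ¬ Function.Injective fun n : ℕ => γ ^ n := by
    intro hinj
    exact Set.infinite_range_of_injective hinj hfin
  have hord : IsOfFinOrder γ := by
    rw [Function.not_injective_iff] at hninj
    obtain ⟨m, n, hmn, hne'⟩ := hninj
    rcases hne'.lt_or_gt with hlt | hlt
    · refine isOfFinOrder_iff_pow_eq_one.mpr ⟨n - m, by omega, ?_⟩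
      have : γ ^ m * γ ^ (n - m) = γ ^ m * 1 := by
        rw [mul_one, ← pow_add]
        rw [show m + (n - m) = n by omega]
        exact hmn.symm
      exact mul_left_cancel this
    · refine isOfFinOrder_iff_pow_eq_one.mpr ⟨m - n, by omega, ?_⟩
      have : γ ^ n * γ ^ (m - n) = γ ^ n * 1 := by
        rw [mul_one, ← pow_add]
        rw [show n + (m - n) = m by omega]
        exact hmn
      exact mul_left_cancel this
  have hord' : IsOfFinOrder (⟨γ, hγ⟩ : Γ) := by
    obtain ⟨k, hk, hk1⟩ := isOfFinOrder_iff_pow_eq_one.mp hord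
    exact isOfFinOrder_iff_pow_eq_one.mpr ⟨k, hk, by
      ext
      simp [hk1]⟩
  exact htf ⟨γ, hγ⟩ (fun hh => hne (by simpa [Subtype.ext_iff] using hh)) hord'

lemma exists_ne_o (Γ : Subgroup SL2R) (hdisc : DiscreteTopology Γ)
    (hcc : IsCocompact Γ)
    (htf : Monoid.IsTorsionFree Γ) :
    ∃ l, l ∈ orbitO Γ ∧ l ≠ o := by
  obtain ⟨K, hK, hcover⟩ := hcc
  by_contra h
  push_neg at h
  have hall : ∀ γ : SL2R, γ ∈ Γ → γ = 1 := by
    intro γ hγ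
    exact fix_o_eq_one Γ hdisc htf hγ (h (γ • o) ⟨γ, hγ, rfl⟩)
  have : (Set.univ : Set ℍ) = K := by
    rw [← hcover]
    apply Set.eq_of_subset_of_subset
    · intro z hz
      obtain ⟨s, ⟨γ, rfl⟩, hzs⟩ := hz
      simp only [hall (γ : SL2R) γ.2] at hzs
      simpa using hzs
    · intro z hz
      exact Set.mem_iUnion.mpr ⟨⟨1, Γ.one_mem⟩, by simpa using hz⟩
  exact NoncompactSpace.noncompact_univ (this ▸ hK)

lemma eq_one_or_neg_one_of_fix (g : SL2R) (h1 : g • o = o) {z : ℍ} (hz : z ≠ o)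
    (h2 : g • z = z) : g = 1 ∨ g = -1 := by
  have hdet : g 0 0 * g 1 1 - g 0 1 * g 1 0 = 1 := by
    have hp := g.property
    rwa [Matrix.det_fin_two] at hp
  have ho : (((g 0 0 : ℝ) : ℂ) * Complex.I + ((g 0 1 : ℝ) : ℂ)) =
      Complex.I * (((g 1 0 : ℝ) : ℂ) * Complex.I + ((g 1 1 : ℝ) : ℂ)) := by
    have hc := congrArg (UpperHalfPlane.coe) h1
    rw [smul_o_coe] at hc
    rw [div_eq_iff (show (((g 1 0 : ℝ) : ℂ)) * Complex.I + ((g 1 1 : ℝ) : ℂ) ≠ 0 from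
      denom_ne_zero' g o)] at hc
    rw [show (o : ℂ) = Complex.I from rfl] at hc
    exact hc
  have ha : g 0 0 = g 1 1 := by
    have := congrArg Complex.im ho
    simpa using this
  have hb : g 0 1 = -(g 1 0) := by
    have := congrArg Complex.re ho
    simpa using this
  have hzz : (((g 0 0 : ℝ) : ℂ) * (z : ℂ) + ((g 0 1 : ℝ) : ℂ)) =
      (z : ℂ) * (((g 1 0 : ℝ) : ℂ) * (z : ℂ) + ((g 1 1 : ℝ) : ℂ)) := by
    have hc := congrArg (UpperHalfPlane.coe) h2
    rw [coe_smul'] at hc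
    rw [div_eq_iff (denom_ne_zero' g z)] at hc
    exact hc
  have hc0 : g 1 0 = 0 := by
    by_contra hc
    have hz2 : (z : ℂ) ^ 2 = -1 := by
      have hcne : ((g 1 0 : ℝ) : ℂ) ≠ 0 := by
        simpa using hc
      rw [ha, hb] at hzz
      have : ((g 1 0 : ℝ) : ℂ) * ((z : ℂ) ^ 2 + 1) = 0 := by
        push_cast at hzz ⊢
        ring_nf
        ring_nf at hzz
        linear_combination - hzz
      rcases mul_eq_zero.mp this with h' | h'
      · exact absurd h' hcne
      · linear_combination h'
    have hfac : ((z : ℂ) - Complex.I) * ((z : ℂ) + Complex.I) = 0 := by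
      have hI := Complex.I_sq
      linear_combination hz2 - hI
    rcases mul_eq_zero.mp hfac with h' | h'
    · rw [sub_eq_zero] at h'
      exact hz (UpperHalfPlane.ext h')
    · have him : z.im = -1 := by
        have := congrArg Complex.im (eq_neg_of_add_eq_zero_left h')
        simpa using this
      linarith [z.im_pos]
  have hb0 : g 0 1 = 0 := by rw [hb, hc0, neg_zero]
  have ha1 : g 0 0 = 1 ∨ g 0 0 = -1 := by
    have : g 0 0 * g 0 0 = 1 := by
      rw [← ha, hb0, hc0] at hdet
      linarith [hdet]
    exact mul_self_eq_one_iff.mp this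
  rcases ha1 with h' | h'
  · left
    apply Subtype.ext
    show (g : M2) = (1 : M2)
    ext i j
    fin_cases i <;> fin_cases j <;>
      simp [Matrix.one_apply, h', hb0, hc0, ← ha]
  · right
    apply Subtype.ext
    show (g : M2) = ((-1 : SL2R) : M2)
    have : ((-1 : SL2R) : M2) = -(1 : M2) := by
      simp
    rw [this]
    ext i j
    fin_cases i <;> fin_cases j <;>
      simp [Matrix.one_apply, h', hb0, hc0, ← ha]

lemma finite_two_point {F F' : Set ℍ} (hF : F.Finite) (hF' : F'.Finite) {z₀ : ℍ}
    (hz₀ : z₀ ≠ o) : {g : SL2R | g • o ∈ F ∧ g • z₀ ∈ F'}.Finite := by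
  have hsub : {g : SL2R | g • o ∈ F ∧ g • z₀ ∈ F'} ⊆
      ⋃ p ∈ F ×ˢ F', {g : SL2R | g • o = p.1 ∧ g • z₀ = p.2} := by
    rintro g ⟨hg1, hg2⟩
    exact Set.mem_biUnion (Set.mk_mem_prod hg1 hg2) ⟨rfl, rfl⟩
  refine Set.Finite.subset (Set.Finite.biUnion (hF.prod hF') fun p _ => ?_) hsub
  rcases Set.eq_empty_or_nonempty {g : SL2R | g • o = p.1 ∧ g • z₀ = p.2} with he | ⟨h, hh⟩
  · rw [he]; exact Set.finite_empty
  refine Set.Finite.subset ((Set.finite_singleton (-h)).insert h) ?_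
  intro g hg
  have h1 : (h⁻¹ * g) • o = o := by
    rw [mul_smul, hg.1, ← hh.1, inv_smul_smul]
  have h2 : (h⁻¹ * g) • z₀ = z₀ := by
    rw [mul_smul, hg.2, ← hh.2, inv_smul_smul]
  rcases eq_one_or_neg_one_of_fix (h⁻¹ * g) h1 hz₀ h2 with h' | h'
  · left
    have := congrArg (h * ·) h'
    simpa [mul_assoc] using this
  · right
    have := congrArg (h * ·) h'
    simp only [← mul_assoc, mul_inv_cancel, one_mul, mul_neg_one] at this
    simp [this]

lemma o_mem_orbit (Γ : Subgroup SL2R) : o ∈ orbitO Γ := ⟨1, Γ.one_mem, one_smul _ _⟩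

lemma finite_stab_ball (Γ : Subgroup SL2R) (hdisc : DiscreteTopology Γ)
    {l₀ : ℍ} (hl₀ : l₀ ∈ orbitO Γ) (hl₀ne : l₀ ≠ o) (r r' : ℝ) :
    {g : SL2R | g ∈ MulAction.stabilizer SL2R (orbitO Γ) ∧
      dist (g • o) o ≤ r ∧ dist (g • l₀) o ≤ r'}.Finite := by
  refine Set.Finite.subset
    (finite_two_point (finite_orbit_ball Γ hdisc r) (finite_orbit_ball Γ hdisc r') hl₀ne) ?_
  rintro g ⟨hgS, hg1, hg2⟩
  rw [MulAction.mem_stabilizer_iff] at hgS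
  constructor
  · exact ⟨by rw [← hgS]; exact Set.smul_mem_smul_set (o_mem_orbit Γ), hg1⟩
  · exact ⟨by rw [← hgS]; exact Set.smul_mem_smul_set hl₀, hg2⟩

theorem stabilizer_of_orbit_discrete'
    (Γ : Subgroup SL2R)
    (hdisc : DiscreteTopology Γ) (hcc : IsCocompact Γ)
    (htf : Monoid.IsTorsionFree Γ) :
    DiscreteTopology (MulAction.stabilizer SL2R (orbitO Γ)) ∧
      ProperlyDiscontinuousSMul (MulAction.stabilizer SL2R (orbitO Γ)) ℍ := by
  obtain ⟨l₀, hl₀, hl₀ne⟩ := exists_ne_o Γ hdisc hcc htf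
  set S := MulAction.stabilizer SL2R (orbitO Γ) with hS
  constructor
  · rw [discreteTopology_iff_isOpen_singleton]
    intro x
    obtain ⟨C, hCcomp, hCnhds⟩ := exists_compact_mem_nhds (x : SL2R)
    obtain ⟨r₁, hr₁⟩ := (hCcomp.image (continuous_smul_const o)).isBounded.subset_closedBall o
    obtain ⟨r₂, hr₂⟩ := (hCcomp.image (continuous_smul_const l₀)).isBounded.subset_closedBall o
    have hfin : ((S : Set SL2R) ∩ C).Finite := by
      refine Set.Finite.subset (finite_stab_ball Γ hdisc hl₀ hl₀ne r₁ r₂) ?_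
      rintro g ⟨hgS, hgC⟩
      exact ⟨hgS, mem_closedBall.mp (hr₁ ⟨g, hgC, rfl⟩), mem_closedBall.mp (hr₂ ⟨g, hgC, rfl⟩)⟩
    have hD : IsClosed (((S : Set SL2R) ∩ C) \ {(x : SL2R)}) :=
      (hfin.subset Set.diff_subset).isClosed
    have hU : IsOpen (interior C \ (((S : Set SL2R) ∩ C) \ {(x : SL2R)})) :=
      isOpen_interior.sdiff hD
    rw [isOpen_induced_iff]
    refine ⟨_, hU, ?_⟩
    ext y
    simp only [Set.mem_preimage, Set.mem_singleton_iff]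
    constructor
    · rintro ⟨hy1, hy2⟩
      by_contra hne
      exact hy2 ⟨⟨y.2, interior_subset hy1⟩, fun h => hne (Subtype.ext h)⟩
    · rintro rfl
      exact ⟨mem_interior_iff_mem_nhds.mpr hCnhds, fun h => h.2 rfl⟩
  · constructor
    intro K L hK hL
    obtain ⟨rK, hrK⟩ := hK.isBounded.subset_closedBall o
    obtain ⟨rL, hrL⟩ := hL.isBounded.subset_closedBall o
    have hfin := finite_stab_ball Γ hdisc hl₀ hl₀ne (rK + rL) (dist l₀ o + rK + rL)
    refine Set.Finite.preimage (Set.injOn_of_injective Subtype.coe_injective) hfin |>.subset ?_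
    intro γ hγ
    obtain ⟨z, ⟨k, hk, hγk⟩, hzL⟩ := hγ
    have hko : dist k o ≤ rK := mem_closedBall.mp (hrK hk)
    have hzo : dist z o ≤ rL := mem_closedBall.mp (hrL hzL)
    have hγkz : (γ : SL2R) • k = z := hγk
    refine ⟨γ.2, ?_, ?_⟩
    · calc dist ((γ : SL2R) • o) o
          ≤ dist ((γ : SL2R) • o) ((γ : SL2R) • k) + dist ((γ : SL2R) • k) o :=
            dist_triangle _ _ _
        _ = dist o k + dist z o := by rw [dist_smul, hγkz]
        _ ≤ rK + rL := by rw [dist_comm]; exact add_le_add hko hzo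
    · calc dist ((γ : SL2R) • l₀) o
          ≤ dist ((γ : SL2R) • l₀) ((γ : SL2R) • k) + dist ((γ : SL2R) • k) o :=
            dist_triangle _ _ _
        _ = dist l₀ k + dist z o := by rw [dist_smul, hγkz]
        _ ≤ (dist l₀ o + dist o k) + rL := add_le_add (dist_triangle _ _ _) hzo
        _ ≤ dist l₀ o + rK + rL := by rw [dist_comm o k] at *; linarith


/-- The setwise stabilizer of the orbit `Λ = Γ • o` is a discrete subgroup of `SL(2,ℝ)`;
in particular it acts properly discontinuously on `ℍ`. -/
theorem stabilizer_of_orbit_discrete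
    (Γ : Subgroup SL2R)
    (hdisc : DiscreteTopology Γ) (hcc : IsCocompact Γ) (htf : Monoid.IsTorsionFree Γ) :
    DiscreteTopology (MulAction.stabilizer SL2R (orbitO Γ)) ∧
      ProperlyDiscontinuousSMul (MulAction.stabilizer SL2R (orbitO Γ)) ℍ :=
  stabilizer_of_orbit_discrete' Γ hdisc hcc htf
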